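/- arXiv:2506.00442 — 2 statements merged into one kernel-verified Lean document; each statement's English description precedes it below -/
import Mathlib

section
/- Let k, n ∈ ℕ, α ∈ (0,1], L ≥ 0, s ∈ (0,1), p₁, p₂ ∈ (1,∞), and let G : ℂ → ℂ be α-Hölder with constant L and satisfy G(0) = 0. Then for every measurable u : ℝ^k × 𝕋^n → ℂ one has, as an inequality in [0,∞], ∫_{ℝ^k×ℝ^k} ( ‖G(u(z₁,·)) − G(u(z₂,·))‖_{L^{p₂/α}(𝕋^n)} / |z₁ − z₂|^{αs} )^{p₁/α} · |z₁ − z₂|^{−k} dz₁ dz₂ ≤ L^{p₁/α} · ∫_{ℝ^k×ℝ^k} ( ‖u(z₁,·) − u(z₂,·)‖_{L^{p₂}(𝕋^n)} / |z₁ − z₂|^{s} )^{p₁} · |z₁ − z₂|^{−k} dz₁ dz₂. -/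
open MeasureTheory
open scoped ENNReal NNReal

instance : Fact (0 < 2 * Real.pi) := ⟨by positivity⟩

/-- The seminorm part of the second estimate of Corollary 3.2 of the paper: the
Gagliardo-type seminorm (characterizing the `L^{p₂}(𝕋^n)`-valued Besov seminorm on `ℝ^k`)
of `G∘u` with parameters `(αs, p₁/α, p₂/α)` is bounded by `L^{p₁/α}` times that of `u`
with parameters `(s, p₁, p₂)`, as an inequality in `[0,∞]`. -/
theorem holder_comp_gagliardo_seminorm
    (k n : ℕ) (hk : 0 < k) (hn : 0 < n) (α L s : ℝ)
    (hα : 0 < α) (hα1 : α ≤ 1) (hL : 0 ≤ L) (hs : 0 < s) (hs1 : s < 1)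
    (p₁ p₂ : ℝ) (hp₁ : 1 < p₁) (hp₂ : 1 < p₂)
    (G : ℂ → ℂ)
    (hG : ∀ w₁ w₂ : ℂ, ‖G w₁ - G w₂‖ ≤ L * ‖w₁ - w₂‖ ^ α)
    (hG0 : G 0 = 0)
    (u : (EuclideanSpace ℝ (Fin k)) × (Fin n → AddCircle (2 * Real.pi)) → ℂ)
    (hu : Measurable u) :
    (∫⁻ z : EuclideanSpace ℝ (Fin k) × EuclideanSpace ℝ (Fin k),
        ((∫⁻ y : Fin n → AddCircle (2 * Real.pi),
              (‖G (u (z.1, y)) - G (u (z.2, y))‖₊ : ℝ≥0∞) ^ (p₂ / α)) ^ (α / p₂)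
            / edist z.1 z.2 ^ (α * s)) ^ (p₁ / α)
          * edist z.1 z.2 ^ (-(k : ℝ)))
      ≤ ENNReal.ofReal L ^ (p₁ / α) *
        ∫⁻ z : EuclideanSpace ℝ (Fin k) × EuclideanSpace ℝ (Fin k),
          ((∫⁻ y : Fin n → AddCircle (2 * Real.pi),
                (‖u (z.1, y) - u (z.2, y)‖₊ : ℝ≥0∞) ^ p₂) ^ (1 / p₂)
              / edist z.1 z.2 ^ s) ^ p₁
            * edist z.1 z.2 ^ (-(k : ℝ)) := by
  have hαne : α ≠ 0 := hα.ne'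
  have hp₂0 : 0 < p₂ := lt_trans one_pos hp₂
  have hp₁0 : 0 < p₁ := lt_trans one_pos hp₁
  set L' : ℝ≥0∞ := ENNReal.ofReal L with hL'
  have hLtop : L' ^ (p₁ / α) ≠ ∞ :=
    ENNReal.rpow_ne_top_of_nonneg (by positivity) ENNReal.ofReal_ne_top
  rw [← lintegral_const_mul' _ _ hLtop]
  refine lintegral_mono fun z => ?_
  -- pointwise Hölder bound in ℝ≥0∞
  have hpt : ∀ w₁ w₂ : ℂ, (‖G w₁ - G w₂‖₊ : ℝ≥0∞) ≤ L' * (‖w₁ - w₂‖₊ : ℝ≥0∞) ^ α := by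
    intro w₁ w₂
    have h1 : (‖G w₁ - G w₂‖₊ : ℝ≥0∞) = ENNReal.ofReal ‖G w₁ - G w₂‖ :=
      (ofReal_norm_eq_enorm _).symm
    have h2 : (‖w₁ - w₂‖₊ : ℝ≥0∞) = ENNReal.ofReal ‖w₁ - w₂‖ :=
      (ofReal_norm_eq_enorm _).symm
    rw [h1, h2, ENNReal.ofReal_rpow_of_nonneg (norm_nonneg _) hα.le,
      ← ENNReal.ofReal_mul hL]
    exact ENNReal.ofReal_le_ofReal (hG w₁ w₂)
  set d : ℝ≥0∞ := edist z.1 z.2 with hd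
  set A : ℝ≥0∞ := (∫⁻ y : Fin n → AddCircle (2 * Real.pi),
      (‖G (u (z.1, y)) - G (u (z.2, y))‖₊ : ℝ≥0∞) ^ (p₂ / α)) ^ (α / p₂) with hA
  set B : ℝ≥0∞ := (∫⁻ y : Fin n → AddCircle (2 * Real.pi),
      (‖u (z.1, y) - u (z.2, y)‖₊ : ℝ≥0∞) ^ p₂) ^ (1 / p₂) with hB
  -- inner integral bound : A ≤ L' * B ^ α
  have hinner : A ≤ L' * B ^ α := by
    have h2 : (∫⁻ y : Fin n → AddCircle (2 * Real.pi),
        (‖G (u (z.1, y)) - G (u (z.2, y))‖₊ : ℝ≥0∞) ^ (p₂ / α))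
        ≤ L' ^ (p₂ / α) * ∫⁻ y : Fin n → AddCircle (2 * Real.pi),
            (‖u (z.1, y) - u (z.2, y)‖₊ : ℝ≥0∞) ^ p₂ := by
      rw [← lintegral_const_mul' _ _
        (ENNReal.rpow_ne_top_of_nonneg (by positivity) ENNReal.ofReal_ne_top)]
      refine lintegral_mono fun y => ?_
      calc (‖G (u (z.1, y)) - G (u (z.2, y))‖₊ : ℝ≥0∞) ^ (p₂ / α)
          ≤ (L' * (‖u (z.1, y) - u (z.2, y)‖₊ : ℝ≥0∞) ^ α) ^ (p₂ / α) :=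
            ENNReal.rpow_le_rpow (hpt _ _) (by positivity)
        _ = L' ^ (p₂ / α) * (‖u (z.1, y) - u (z.2, y)‖₊ : ℝ≥0∞) ^ p₂ := by
            rw [ENNReal.mul_rpow_of_nonneg _ _ (by positivity), ← ENNReal.rpow_mul,
              show α * (p₂ / α) = p₂ by field_simp]
    calc A = (∫⁻ y : Fin n → AddCircle (2 * Real.pi),
          (‖G (u (z.1, y)) - G (u (z.2, y))‖₊ : ℝ≥0∞) ^ (p₂ / α)) ^ (α / p₂) := hA
      _ ≤ (L' ^ (p₂ / α) * ∫⁻ y : Fin n → AddCircle (2 * Real.pi),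
          (‖u (z.1, y) - u (z.2, y)‖₊ : ℝ≥0∞) ^ p₂) ^ (α / p₂) :=
        ENNReal.rpow_le_rpow h2 (by positivity)
      _ = L' * B ^ α := by
        rw [hB, ENNReal.mul_rpow_of_nonneg _ _ (by positivity), ← ENNReal.rpow_mul,
          ← ENNReal.rpow_mul,
          show p₂ / α * (α / p₂) = 1 by field_simp,
          show 1 / p₂ * α = α / p₂ by ring, ENNReal.rpow_one]
  clear_value A B d
  -- now the pointwise outer estimate
  have h3 : (A / d ^ (α * s)) ^ (p₁ / α) ≤ L' ^ (p₁ / α) * (B / d ^ s) ^ p₁ := by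
    have hdiv : A / d ^ (α * s) ≤ L' * (B / d ^ s) ^ α := by
      calc A / d ^ (α * s) ≤ (L' * B ^ α) / d ^ (α * s) :=
            ENNReal.div_le_div_right hinner _
        _ = L' * (B / d ^ s) ^ α := by
            rw [ENNReal.div_rpow_of_nonneg _ _ hα.le, ← ENNReal.rpow_mul,
              mul_comm s α, mul_div_assoc]
    calc (A / d ^ (α * s)) ^ (p₁ / α)
        ≤ (L' * (B / d ^ s) ^ α) ^ (p₁ / α) :=
          ENNReal.rpow_le_rpow hdiv (by positivity)
      _ = L' ^ (p₁ / α) * (B / d ^ s) ^ p₁ := by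
          rw [ENNReal.mul_rpow_of_nonneg _ _ (by positivity), ← ENNReal.rpow_mul,
            show α * (p₁ / α) = p₁ by field_simp]
  calc (A / d ^ (α * s)) ^ (p₁ / α) * d ^ (-(k : ℝ))
      ≤ (L' ^ (p₁ / α) * (B / d ^ s) ^ p₁) * d ^ (-(k : ℝ)) :=
        mul_le_mul_left h3 _
    _ = L' ^ (p₁ / α) * ((B / d ^ s) ^ p₁ * d ^ (-(k : ℝ))) := by ring
end

section
/- Let k, n ∈ ℕ, α ∈ (0,1], L ≥ 0, s ∈ (0,1), p₁, p₂ ∈ (1,∞), and let G : ℂ → ℂ be α-Hölder with constant L and satisfy G(0) = 0. For measurable v : ℝ^k × 𝕋^n → ℂ and parameters (σ, r₁, r₂) define the difference norm 𝒩_{σ,r₁,r₂}(v) := ‖v‖_{L^{r₁}_x L^{r₂}_y} + ( ∫_{ℝ^k×ℝ^k} ( ‖v(z₁,·) − v(z₂,·)‖_{L^{r₂}(𝕋^n)} / |z₁ − z₂|^{σ} )^{r₁} · |z₁ − z₂|^{−k} dz₁ dz₂ )^{1/r₁}. Then for every measurable u : ℝ^k × 𝕋^n → ℂ one has 𝒩_{αs,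 p₁/α, p₂/α}(G∘u) ≤ 2L · ( 𝒩_{s, p₁, p₂}(u) )^{α}. -/
open MeasureTheory
open scoped ENNReal NNReal

/-- The difference norm `𝒩_{σ,r₁,r₂}(v)`: the mixed Lebesgue norm
`‖v‖_{L^{r₁}_x L^{r₂}_y}` plus the Gagliardo-type seminorm with smoothness `σ` and
integrability `r₁` on `ℝ^k`, taken with `L^{r₂}(𝕋^n)`-valued differences; this is
equivalent to the `B^σ_{r₁,r₁}(ℝ^k; L^{r₂}(𝕋^n))` norm. -/
noncomputable def mixedDiffNorm (k n : ℕ) (σ r₁ r₂ : ℝ)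
    (v : (EuclideanSpace ℝ (Fin k)) × (Fin n → AddCircle (2 * Real.pi)) → ℂ) : ℝ≥0∞ :=
  (∫⁻ x : EuclideanSpace ℝ (Fin k),
      (∫⁻ y : Fin n → AddCircle (2 * Real.pi),
          (‖v (x, y)‖₊ : ℝ≥0∞) ^ r₂) ^ (r₁ / r₂)) ^ (1 / r₁)
  + (∫⁻ z : EuclideanSpace ℝ (Fin k) × EuclideanSpace ℝ (Fin k),
      ((∫⁻ y : Fin n → AddCircle (2 * Real.pi),
            (‖v (z.1, y) - v (z.2, y)‖₊ : ℝ≥0∞) ^ r₂) ^ (1 / r₂)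
          / edist z.1 z.2 ^ σ) ^ r₁
        * edist z.1 z.2 ^ (-(k : ℝ))) ^ (1 / r₁)

/-- Generic core estimate: if `f ≤ C·g^α` pointwise, then the weighted mixed norm of `f`
with exponents `(p₁/α, p₂/α)` is bounded by `C` times the `α`-th power of the weighted
mixed norm of `g` with exponents `(p₁, p₂)`. -/
lemma aux_pow {C : ℝ≥0∞} (hC : C ≠ ∞) {α p₁ p₂ : ℝ} (hα : 0 < α) (hp₁ : 0 < p₁)
    (hp₂ : 0 < p₂) {X Y : Type*} [MeasureSpace X] [MeasureSpace Y]
    (f g : X → Y → ℝ≥0∞) (W : X → ℝ≥0∞)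
    (h : ∀ x y, f x y ≤ C * g x y ^ α) :
    (∫⁻ x, (∫⁻ y, f x y ^ (p₂ / α)) ^ ((p₁ / α) / (p₂ / α)) * W x) ^ (1 / (p₁ / α))
      ≤ C * ((∫⁻ x, (∫⁻ y, g x y ^ p₂) ^ (p₁ / p₂) * W x) ^ (1 / p₁)) ^ α := by
  have hα0 : α ≠ 0 := hα.ne'
  have hp₁0 : p₁ ≠ 0 := hp₁.ne'
  have hp₂0 : p₂ ≠ 0 := hp₂.ne'
  have hq : (p₁ / α) / (p₂ / α) = p₁ / p₂ := by
    field_simp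
  have hCp2 : C ^ (p₂ / α) ≠ ∞ := ENNReal.rpow_ne_top_of_nonneg (by positivity) hC
  have hCp1 : C ^ (p₁ / α) ≠ ∞ := ENNReal.rpow_ne_top_of_nonneg (by positivity) hC
  have h1 : ∀ x, (∫⁻ y, f x y ^ (p₂ / α)) ≤ C ^ (p₂ / α) * ∫⁻ y, g x y ^ p₂ := by
    intro x
    rw [← lintegral_const_mul' _ _ hCp2]
    refine lintegral_mono fun y => ?_
    calc f x y ^ (p₂ / α) ≤ (C * g x y ^ α) ^ (p₂ / α) :=
          ENNReal.rpow_le_rpow (h x y) (by positivity)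
      _ = C ^ (p₂ / α) * (g x y ^ α) ^ (p₂ / α) :=
          ENNReal.mul_rpow_of_nonneg _ _ (by positivity)
      _ = C ^ (p₂ / α) * g x y ^ p₂ := by
          rw [← ENNReal.rpow_mul]
          congr 1
          field_simp
  have h2 : (∫⁻ x, (∫⁻ y, f x y ^ (p₂ / α)) ^ ((p₁ / α) / (p₂ / α)) * W x)
      ≤ C ^ (p₁ / α) * ∫⁻ x, (∫⁻ y, g x y ^ p₂) ^ (p₁ / p₂) * W x := by
    rw [← lintegral_const_mul' _ _ hCp1]
    refine lintegral_mono fun x => ?_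
    rw [hq, ← mul_assoc]
    gcongr ?_ * W x
    calc (∫⁻ y, f x y ^ (p₂ / α)) ^ (p₁ / p₂)
        ≤ (C ^ (p₂ / α) * ∫⁻ y, g x y ^ p₂) ^ (p₁ / p₂) :=
          ENNReal.rpow_le_rpow (h1 x) (by positivity)
      _ = C ^ (p₁ / α) * (∫⁻ y, g x y ^ p₂) ^ (p₁ / p₂) := by
          rw [ENNReal.mul_rpow_of_nonneg _ _ (by positivity), ← ENNReal.rpow_mul]
          congr 2
          field_simp
  calc (∫⁻ x, (∫⁻ y, f x y ^ (p₂ / α)) ^ ((p₁ / α) / (p₂ / α)) * W x) ^ (1 / (p₁ / α))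
      ≤ (C ^ (p₁ / α) * ∫⁻ x, (∫⁻ y, g x y ^ p₂) ^ (p₁ / p₂) * W x) ^ (1 / (p₁ / α)) :=
        ENNReal.rpow_le_rpow h2 (by positivity)
    _ = C * ((∫⁻ x, (∫⁻ y, g x y ^ p₂) ^ (p₁ / p₂) * W x) ^ (1 / p₁)) ^ α := by
        rw [ENNReal.mul_rpow_of_nonneg _ _ (by positivity), ← ENNReal.rpow_mul,
          ← ENNReal.rpow_mul]
        congr 2
        · rw [show p₁ / α * (1 / (p₁ / α)) = 1 by field_simp, ENNReal.rpow_one]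
        · field_simp

/-- Unweighted version of `aux_pow`. -/
lemma aux_pow' {C : ℝ≥0∞} (hC : C ≠ ∞) {α p₁ p₂ : ℝ} (hα : 0 < α) (hp₁ : 0 < p₁)
    (hp₂ : 0 < p₂) {X Y : Type*} [MeasureSpace X] [MeasureSpace Y]
    (f g : X → Y → ℝ≥0∞)
    (h : ∀ x y, f x y ≤ C * g x y ^ α) :
    (∫⁻ x, (∫⁻ y, f x y ^ (p₂ / α)) ^ ((p₁ / α) / (p₂ / α))) ^ (1 / (p₁ / α))
      ≤ C * ((∫⁻ x, (∫⁻ y, g x y ^ p₂) ^ (p₁ / p₂)) ^ (1 / p₁)) ^ α := by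
  simpa using aux_pow hC hα hp₁ hp₂ f g (fun _ => 1) h

/-- Rewriting of the Gagliardo integrand into a weighted product form. -/
lemma shape_eq (I d : ℝ≥0∞) (σ r₁ r₂ kk : ℝ) (hr₁ : 0 ≤ r₁) :
    (I ^ (1 / r₂) / d ^ σ) ^ r₁ * d ^ (-kk)
      = I ^ (r₁ / r₂) * (d ^ (-(σ * r₁)) * d ^ (-kk)) := by
  rw [ENNReal.div_rpow_of_nonneg _ _ hr₁, ← ENNReal.rpow_mul I, ← ENNReal.rpow_mul d,
    div_eq_mul_inv, ← ENNReal.rpow_neg, mul_assoc, one_div_mul_eq_div]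

set_option maxHeartbeats 1000000 in
/-- The second estimate of Corollary 3.2 of the paper, in the difference-norm
formulation: for an `α`-Hölder `G : ℂ → ℂ` with constant `L` and `G(0) = 0`,
`𝒩_{αs, p₁/α, p₂/α}(G∘u) ≤ 2L · (𝒩_{s, p₁, p₂}(u))^α`. -/
theorem holder_comp_besov_mixed
    (k n : ℕ) (hk : 0 < k) (hn : 0 < n) (α L s : ℝ)
    (hα : 0 < α) (hα1 : α ≤ 1) (hL : 0 ≤ L) (hs : 0 < s) (hs1 : s < 1)
    (p₁ p₂ : ℝ) (hp₁ : 1 < p₁) (hp₂ : 1 < p₂)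
    (G : ℂ → ℂ)
    (hG : ∀ w₁ w₂ : ℂ, ‖G w₁ - G w₂‖ ≤ L * ‖w₁ - w₂‖ ^ α)
    (hG0 : G 0 = 0)
    (u : (EuclideanSpace ℝ (Fin k)) × (Fin n → AddCircle (2 * Real.pi)) → ℂ)
    (hu : Measurable u) :
    mixedDiffNorm k n (α * s) (p₁ / α) (p₂ / α) (fun w => G (u w))
      ≤ ENNReal.ofReal (2 * L) * (mixedDiffNorm k n s p₁ p₂ u) ^ α := by
  have hα0 : α ≠ 0 := hα.ne'
  have hp₁0 : (0:ℝ) < p₁ := lt_trans one_pos hp₁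
  have hp₂0 : (0:ℝ) < p₂ := lt_trans one_pos hp₂
  have hCne : ENNReal.ofReal L ≠ ∞ := ENNReal.ofReal_ne_top
  -- pointwise Hölder bound in `ℝ≥0∞`
  have hpt : ∀ a b : ℂ, (‖G a - G b‖₊ : ℝ≥0∞)
      ≤ ENNReal.ofReal L * ((‖a - b‖₊ : ℝ≥0∞)) ^ α := by
    intro a b
    rw [show (‖G a - G b‖₊ : ℝ≥0∞) = ENNReal.ofReal ‖G a - G b‖ from (ofReal_norm _).symm,
      show (‖a - b‖₊ : ℝ≥0∞) = ENNReal.ofReal ‖a - b‖ from (ofReal_norm _).symm,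
      ENNReal.ofReal_rpow_of_nonneg (norm_nonneg _) hα.le,
      ← ENNReal.ofReal_mul hL]
    exact ENNReal.ofReal_le_ofReal (by simpa using hG a b)
  have hpt0 : ∀ a : ℂ, (‖G a‖₊ : ℝ≥0∞)
      ≤ ENNReal.ofReal L * ((‖a‖₊ : ℝ≥0∞)) ^ α := by
    intro a
    simpa [hG0] using hpt a 0
  unfold mixedDiffNorm
  -- first term
  have hterm1 :
      (∫⁻ x : EuclideanSpace ℝ (Fin k),
          (∫⁻ y : Fin n → AddCircle (2 * Real.pi),
              (‖G (u (x, y))‖₊ : ℝ≥0∞) ^ (p₂ / α)) ^ ((p₁ / α) / (p₂ / α))) ^ (1 / (p₁ / α))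
        ≤ ENNReal.ofReal L *
          ((∫⁻ x : EuclideanSpace ℝ (Fin k),
              (∫⁻ y : Fin n → AddCircle (2 * Real.pi),
                  (‖u (x, y)‖₊ : ℝ≥0∞) ^ p₂) ^ (p₁ / p₂)) ^ (1 / p₁)) ^ α := by
    apply aux_pow' hCne hα hp₁0 hp₂0 (X := EuclideanSpace ℝ (Fin k))
    intro x y
    exact hpt0 _
  -- second term
  have harith : α * s * (p₁ / α) = s * p₁ := by field_simp
  have hterm2 :
      (∫⁻ z : EuclideanSpace ℝ (Fin k) × EuclideanSpace ℝ (Fin k),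
          ((∫⁻ y : Fin n → AddCircle (2 * Real.pi),
                (‖G (u (z.1, y)) - G (u (z.2, y))‖₊ : ℝ≥0∞) ^ (p₂ / α)) ^ (1 / (p₂ / α))
              / edist z.1 z.2 ^ (α * s)) ^ (p₁ / α)
            * edist z.1 z.2 ^ (-(k : ℝ))) ^ (1 / (p₁ / α))
        ≤ ENNReal.ofReal L *
          ((∫⁻ z : EuclideanSpace ℝ (Fin k) × EuclideanSpace ℝ (Fin k),
              ((∫⁻ y : Fin n → AddCircle (2 * Real.pi),
                    (‖u (z.1, y) - u (z.2, y)‖₊ : ℝ≥0∞) ^ p₂) ^ (1 / p₂)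
                  / edist z.1 z.2 ^ s) ^ p₁
                * edist z.1 z.2 ^ (-(k : ℝ))) ^ (1 / p₁)) ^ α := by
    have e1 : ∀ z : EuclideanSpace ℝ (Fin k) × EuclideanSpace ℝ (Fin k),
        ((∫⁻ y : Fin n → AddCircle (2 * Real.pi),
              (‖G (u (z.1, y)) - G (u (z.2, y))‖₊ : ℝ≥0∞) ^ (p₂ / α)) ^ (1 / (p₂ / α))
            / edist z.1 z.2 ^ (α * s)) ^ (p₁ / α)
          * edist z.1 z.2 ^ (-(k : ℝ))
        = (∫⁻ y : Fin n → AddCircle (2 * Real.pi),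
              (‖G (u (z.1, y)) - G (u (z.2, y))‖₊ : ℝ≥0∞) ^ (p₂ / α)) ^ ((p₁ / α) / (p₂ / α))
            * (edist z.1 z.2 ^ (-(s * p₁)) * edist z.1 z.2 ^ (-(k : ℝ))) := by
      intro z
      rw [shape_eq _ _ _ _ _ _ (by positivity), harith]
    have e2 : ∀ z : EuclideanSpace ℝ (Fin k) × EuclideanSpace ℝ (Fin k),
        ((∫⁻ y : Fin n → AddCircle (2 * Real.pi),
              (‖u (z.1, y) - u (z.2, y)‖₊ : ℝ≥0∞) ^ p₂) ^ (1 / p₂)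
            / edist z.1 z.2 ^ s) ^ p₁
          * edist z.1 z.2 ^ (-(k : ℝ))
        = (∫⁻ y : Fin n → AddCircle (2 * Real.pi),
              (‖u (z.1, y) - u (z.2, y)‖₊ : ℝ≥0∞) ^ p₂) ^ (p₁ / p₂)
            * (edist z.1 z.2 ^ (-(s * p₁)) * edist z.1 z.2 ^ (-(k : ℝ))) := by
      intro z
      rw [shape_eq _ _ _ _ _ _ hp₁0.le]
    rw [lintegral_congr e1, lintegral_congr e2]
    apply aux_pow hCne hα hp₁0 hp₂0
      (X := EuclideanSpace ℝ (Fin k) × EuclideanSpace ℝ (Fin k))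
      (W := fun z => edist z.1 z.2 ^ (-(s * p₁)) * edist z.1 z.2 ^ (-(k : ℝ)))
    intro z y
    exact hpt _ _
  refine le_trans (add_le_add hterm1 hterm2) ?_
  rw [← mul_add, ENNReal.ofReal_mul (by norm_num : (0:ℝ) ≤ 2), mul_comm (ENNReal.ofReal 2),
    mul_assoc]
  gcongr
  rw [ENNReal.ofReal_ofNat]
  refine le_trans (add_le_add ?_ ?_) (two_mul _).symm.le
  · exact ENNReal.rpow_le_rpow le_self_add hα.le
  · exact ENNReal.rpow_le_rpow le_add_self hα.le
end
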